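/- Let (M, ω, θ) be an LCS manifold with a twisted Hamiltonian action of a connected Lie group G with momentum mapping μ, and let ξ ∈ 𝔤* be a regular value. For x ∈ μ⁻¹(ξ), the ω-orthogonal of the tangent space of the level set is (T_x μ⁻¹(ξ))^ω = { X_a + ξ(a) θ^ω : a ∈ 𝔤 }. -/

import Mathlib

open scoped Manifold

section

variable {E : Type*} [NormedAddCommGroup E] [NormedSpace ℝ E]
  {F : Type*} [NormedAddCommGroup F] [NormedSpace ℝ F]
  {HM : Type*} [TopologicalSpace HM] {HG : Type*} [TopologicalSpace HG]
  (I : ModelWithCorners ℝ E HM) (IG : ModelWithCorners ℝ F HG)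
  {M : Type*} [TopologicalSpace M] [ChartedSpace HM M]
  {G : Type*} [TopologicalSpace G] [ChartedSpace HG G] [Group G]

/-- The exterior derivative of a `1`-form (antisymmetrized manifold derivative). -/
noncomputable def extDerivOne (θ : M → E →L[ℝ] ℝ) (x : M) (u v : E) : ℝ :=
  (show E →L[ℝ] ℝ from mfderiv I 𝓘(ℝ, E →L[ℝ] ℝ) θ x u) v -
    (show E →L[ℝ] ℝ from mfderiv I 𝓘(ℝ, E →L[ℝ] ℝ) θ x v) u

/-- The exterior derivative of a `2`-form (antisymmetrized manifold derivative). -/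
noncomputable def extDerivTwo (ω : M → E →L[ℝ] E →L[ℝ] ℝ) (x : M) (u v w : E) : ℝ :=
  (show E →L[ℝ] E →L[ℝ] ℝ from mfderiv I 𝓘(ℝ, E →L[ℝ] E →L[ℝ] ℝ) ω x u) v w -
    (show E →L[ℝ] E →L[ℝ] ℝ from mfderiv I 𝓘(ℝ, E →L[ℝ] E →L[ℝ] ℝ) ω x v) u w +
    (show E →L[ℝ] E →L[ℝ] ℝ from mfderiv I 𝓘(ℝ, E →L[ℝ] E →L[ℝ] ℝ) ω x w) u v

variable [MulAction G M]

/-- The fundamental vector field of `a ∈ 𝔤 = T₁ G` on `M`. -/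
noncomputable def fundField (a : TangentSpace IG (1 : G)) (x : M) : TangentSpace I x :=
  mfderiv IG I (fun g : G => g • x) (1 : G) a

/-- Let `(M, ω, θ)` be an LCS manifold (with `θ` not exact) with a twisted
Hamiltonian action of a connected Lie group `G`, with momentum mapping `μ` (given by
`ρ : 𝔤 → C^∞(M)`, `μ(x)(a) = ρ_a(x)`, `d_θ ρ_a = i_{X_a} ω`), and let `ξ ∈ 𝔤*` be a regular
value of `μ`.  Then for every `x ∈ μ⁻¹(ξ)`, the `ω`-orthogonal of the tangent space
`T_x μ⁻¹(ξ) = ker d_x μ` of the level set is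
`(T_x μ⁻¹(ξ))^ω = { X_a + ξ(a) • θ^ω  :  a ∈ 𝔤 }`,
where `θ^ω` is the `ω`-dual (s-Lee) vector field of `θ`. -/
theorem level_set_omega_orthogonal
    [IsManifold I (⊤ : ℕ∞) M] [IsManifold IG (⊤ : ℕ∞) G] [LieGroup IG (⊤ : ℕ∞) G]
    [ConnectedSpace M] [ConnectedSpace G]
    [FiniteDimensional ℝ E] [FiniteDimensional ℝ F]
    (hact : ContMDiff (IG.prod I) I (⊤ : ℕ∞) (fun p : G × M => p.1 • p.2))
    (ω : M → E →L[ℝ] E →L[ℝ] ℝ) (θ : M → E →L[ℝ] ℝ)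
    (hωsmooth : ContMDiff I 𝓘(ℝ, E →L[ℝ] E →L[ℝ] ℝ) (⊤ : ℕ∞) ω)
    (hθsmooth : ContMDiff I 𝓘(ℝ, E →L[ℝ] ℝ) (⊤ : ℕ∞) θ)
    (halt : ∀ x u v, ω x u v = - ω x v u)
    (hnondeg : ∀ (x : M) (u : E), (∀ v, ω x u v = 0) → u = 0)
    (hθclosed : ∀ x u v, extDerivOne I θ x u v = 0)
    (hθnotexact : ¬ ∃ g : M → ℝ, ContMDiff I 𝓘(ℝ, ℝ) (⊤ : ℕ∞) g ∧
      ∀ x, (show E →L[ℝ] ℝ from mfderiv I 𝓘(ℝ, ℝ) g x) = θ x)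
    (hLCS : ∀ x u v w, extDerivTwo I ω x u v w
      = θ x u * ω x v w - θ x v * ω x u w + θ x w * ω x u v)
    -- the twisted Hamiltonian structure and the momentum mapping `μ(x)(a) = ρ_a(x)` :
    (ρ : F → M → ℝ)
    (hρlin : ∀ x : M, IsLinearMap ℝ fun a : F => ρ a x)
    (hρsmooth : ∀ a, ContMDiff I 𝓘(ℝ, ℝ) (⊤ : ℕ∞) (ρ a))
    (hρ : ∀ (a : F) (x : M) (v : E),
      (show E →L[ℝ] ℝ from mfderiv I 𝓘(ℝ, ℝ) (ρ a) x) v - ρ a x * θ x v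
        = ω x (fundField I IG (G := G) a x) v)
    -- the `ω`-dual (s-Lee) vector field `θ^ω` :
    (θω : M → E)
    (hθω : ∀ x v, ω x (θω x) v = θ x v)
    -- a regular value `ξ ∈ 𝔤*` of `μ` :
    (ξ : F →ₗ[ℝ] ℝ)
    (hreg : ∀ x : M, (∀ a : F, ρ a x = ξ a) →
      ∀ ξ' : F →ₗ[ℝ] ℝ, ∃ v : E, ∀ a : F,
        (show E →L[ℝ] ℝ from mfderiv I 𝓘(ℝ, ℝ) (ρ a) x) v = ξ' a) :
    ∀ x : M, (∀ a : F, ρ a x = ξ a) →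
      {u : E | ∀ v : E,
          (∀ a : F, (show E →L[ℝ] ℝ from mfderiv I 𝓘(ℝ, ℝ) (ρ a) x) v = 0) → ω x u v = 0}
        = {u : E | ∃ a : F, u = (show E from fundField I IG (G := G) a x) + ξ a • θω x} := by
  intro x hx
  classical
  -- the bilinear form ω x
  set B : LinearMap.BilinForm ℝ E :=
    LinearMap.mk₂ ℝ (fun u v => ω x u v)
      (fun u u' v => by simp [ContinuousLinearMap.add_apply])
      (fun c u v => by simp)
      (fun u v v' => by simp)
      (fun c u v => by simp) with hB
  have hBapp : ∀ u v, B u v = ω x u v := fun u v => rfl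
  have hBrefl : B.IsRefl := by
    intro u v h
    have := halt x v u
    rw [hBapp] at h ⊢
    rw [this, h, neg_zero]
  have hBnd : B.Nondegenerate := hBrefl.nondegenerate_iff_separatingLeft.2 fun u h => hnondeg x u fun v => h v
  -- linearity of the fundamental vector field in a
  have hadd : ∀ a b : F,
      (show E from fundField I IG (G := G) (a + b) x)
        = (show E from fundField I IG (G := G) a x) + (show E from fundField I IG (G := G) b x) :=
    fun a b => (mfderiv IG I (fun g : G => g • x) (1 : G)).map_add a b
  have hsmul : ∀ (c : ℝ) (a : F),
      (show E from fundField I IG (G := G) (c • a) x) = c • (show E from fundField I IG (G := G) a x) :=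
    fun c a => (mfderiv IG I (fun g : G => g • x) (1 : G)).map_smul c a
  -- the linear map a ↦ X_a + ξ a • θω x
  set Y : F →ₗ[ℝ] E :=
    { toFun := fun a => (show E from fundField I IG (G := G) a x) + ξ a • θω x
      map_add' := by
        intro a b
        show (show E from fundField I IG (G := G) (a + b) x) + ξ (a + b) • θω x = _
        rw [hadd, map_add, add_smul]
        abel
      map_smul' := by
        intro c a
        show (show E from fundField I IG (G := G) (c • a) x) + ξ (c • a) • θω x = _
        rw [hsmul, map_smul]
        simp [smul_add, smul_smul]
        change c • (show E from fundField I IG (G := G) a x) + (c * ξ a) • θω x = c • ((show E from fundField I IG (G := G) a x) + ξ a • θω x)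
        rw [smul_add, smul_smul] } with hY
  -- key identity: d(ρ a) v = ω x (Y a) v
  have key : ∀ (a : F) (v : E),
      (show E →L[ℝ] ℝ from mfderiv I 𝓘(ℝ, ℝ) (ρ a) x) v = B (Y a) v := by
    intro a v
    have h1 := hρ a x v
    have h2 := hθω x v
    rw [hx a] at h1
    rw [hBapp]
    show _ = ω x ((show E from fundField I IG (G := G) a x) + ξ a • θω x) v
    have h3 : ω x ((show E from fundField I IG (G := G) a x) + ξ a • θω x) v
        = ω x (fundField I IG (G := G) a x) v + ξ a * ω x (θω x) v := by
      rw [map_add, map_smul, ContinuousLinearMap.add_apply, ContinuousLinearMap.smul_apply]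
      rfl
    rw [h3, h2]
    linarith [h1]
  -- both sides as orthogonals
  set S : Submodule ℝ E := LinearMap.range Y with hS
  have hK : ∀ v : E,
      (∀ a : F, (show E →L[ℝ] ℝ from mfderiv I 𝓘(ℝ, ℝ) (ρ a) x) v = 0)
        ↔ v ∈ B.orthogonal S := by
    intro v
    constructor
    · rintro h _ ⟨a, rfl⟩
      show B (Y a) v = 0
      rw [← key a v]; exact h a
    · intro h a
      rw [key a v]
      exact h (Y a) ⟨a, rfl⟩
  ext u
  simp only [Set.mem_setOf_eq]
  have horth : (∀ v : E,
      (∀ a : F, (show E →L[ℝ] ℝ from mfderiv I 𝓘(ℝ, ℝ) (ρ a) x) v = 0) → ω x u v = 0)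
      ↔ u ∈ B.orthogonal (B.orthogonal S) := by
    constructor
    · intro h v hv
      exact hBrefl u v (h v ((hK v).2 hv))
    · intro h v hv
      exact hBrefl v u (h v ((hK v).1 hv))
  rw [horth, B.orthogonal_orthogonal hBnd hBrefl]
  constructor
  · rintro ⟨a, rfl⟩
    exact ⟨a, rfl⟩
  · rintro ⟨a, rfl⟩
    exact ⟨a, rfl⟩

end
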